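/- Let F be a field, σ a sesqui-morphism, G a σ-symmetric F*-graph on V with adjacency matrix M, and xy an edge of G. For every subset X of V \ {x}: cutrk_{(G∧xy)−x}(X) = rk [ [0, M(x, V\(X∪{x}))]; [M(X,x), M(X, V\(X∪{x}))] ] − 1. -/

import Mathlib

open Matrix



private lemma rank_reindex' {F : Type*} [Field F] {k l m n : Type*} [Fintype l] [Fintype n]
    (e₁ : k ≃ m) (e₂ : l ≃ n) (A : Matrix k l F) :
    (Matrix.reindex e₁ e₂ A).rank = A.rank := by
  rw [Matrix.rank, Matrix.rank, Matrix.mulVecLin_reindex, LinearMap.range_comp,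
    LinearMap.range_comp, LinearEquiv.range, Submodule.map_top, LinearEquiv.finrank_map_eq]

private lemma rank_submatrix'' {F : Type*} [Field F] {k l m n : Type*} [Fintype l] [Fintype n]
    (A : Matrix k l F) (e₁ : m ≃ k) (e₂ : n ≃ l) :
    (A.submatrix e₁ e₂).rank = A.rank := by
  have := rank_reindex' e₁.symm e₂.symm A
  simpa [Matrix.reindex_apply] using this

private def submodProdEquiv {R M N : Type*} [Semiring R] [AddCommMonoid M] [AddCommMonoid N]
    [Module R M] [Module R N] (p : Submodule R M) (q : Submodule R N) :
    (p.prod q) ≃ₗ[R] p × q where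
  toFun z := (⟨z.1.1, z.2.1⟩, ⟨z.1.2, z.2.2⟩)
  invFun z := ⟨(z.1.1, z.2.1), ⟨z.1.2, z.2.2⟩⟩
  left_inv _ := rfl
  right_inv _ := rfl
  map_add' _ _ := rfl
  map_smul' _ _ := rfl

private lemma rank_option_block {F m n : Type*} [Field F] [Fintype m] [Fintype n]
    (B : Matrix (Option m) (Option n) F) (hp : B none none ≠ 0)
    (h2 : ∀ j, B none (some j) = 0) (h3 : ∀ i, B (some i) none = 0) :
    B.rank = (Matrix.of fun i j => B (some i) (some j)).rank + 1 := by
  set D : Matrix m n F := Matrix.of fun i j => B (some i) (some j) with hD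
  have hBn : ∀ v : Option n → F, B.mulVec v none = B none none * v none := by
    intro v
    simp only [Matrix.mulVec, dotProduct, Fintype.sum_option, h2, zero_mul,
      Finset.sum_const_zero, add_zero]
  have hBs : ∀ (v : Option n → F) i, B.mulVec v (some i) = D.mulVec (fun j => v (some j)) i := by
    intro v i
    simp only [Matrix.mulVec, dotProduct, Fintype.sum_option, h3, zero_mul, zero_add, hD,
      Matrix.of_apply]
  let e : ((_ : Option m) → F) ≃ₗ[F] F × (m → F) := LinearEquiv.piOptionEquivProd F
  have hmap : Submodule.map (e : ((_ : Option m) → F) →ₗ[F] F × (m → F))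
      (LinearMap.range B.mulVecLin)
      = (⊤ : Submodule F F).prod (LinearMap.range D.mulVecLin) := by
    ext z
    simp only [Submodule.mem_map, LinearMap.mem_range, Submodule.mem_prod, Submodule.mem_top,
      true_and]
    constructor
    · rintro ⟨w, ⟨v, rfl⟩, rfl⟩
      exact ⟨fun j => v (some j), by
        ext i
        simpa [e, LinearEquiv.piOptionEquivProd, Equiv.piOptionEquivProd] using (hBs v i).symm⟩
    · rintro ⟨u, hu⟩
      refine ⟨B.mulVec (fun o => Option.elim o (z.1 / B none none) u), ⟨_, rfl⟩, ?_⟩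
      have h1 : B.mulVec (fun o => Option.elim o (z.1 / B none none) u) none = z.1 := by
        rw [hBn]; show B none none * (z.1 / B none none) = z.1; field_simp
      have h2' : ∀ i, B.mulVec (fun o => Option.elim o (z.1 / B none none) u) (some i) = z.2 i := by
        intro i; rw [hBs, ← hu]; rfl
      ext
      · simpa [e, LinearEquiv.piOptionEquivProd, Equiv.piOptionEquivProd] using h1
      · simpa [e, LinearEquiv.piOptionEquivProd, Equiv.piOptionEquivProd] using h2' _
  have : B.rank = Module.finrank F
      ((⊤ : Submodule F F).prod (LinearMap.range D.mulVecLin)) := by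
    rw [Matrix.rank, ← hmap, LinearEquiv.finrank_map_eq]
  rw [this]
  rw [(submodProdEquiv _ _).finrank_eq, Module.finrank_prod, finrank_top]
  simp [Matrix.rank, add_comm]

private def colOp {F n : Type*} [Field F] [DecidableEq n] (j0 : n) (β : F) (hβ : β ≠ 0)
    (a b : n → F) : (Option n → F) ≃ₗ[F] (Option n → F) where
  toFun w k :=
    match k with
    | none => β * w none
    | some j => if j = j0 then w (some j0)
        else w (some j) - a j * w none - b j * w (some j0)
  invFun u k :=
    match k with
    | none => β⁻¹ * u none
    | some j => if j = j0 then u (some j0)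
        else u (some j) + a j * (β⁻¹ * u none) + b j * u (some j0)
  left_inv w := by
    funext k
    cases k with
    | none => simp [inv_mul_cancel_left₀ hβ]
    | some j =>
      by_cases h : j = j0
      · simp [h]
      · simp only [if_neg h, eq_self_iff_true, if_true]
        rw [inv_mul_cancel_left₀ hβ]
        ring
  right_inv u := by
    funext k
    cases k with
    | none => simp [mul_inv_cancel_left₀ hβ]
    | some j =>
      by_cases h : j = j0
      · simp [h]
      · simp only [if_neg h, eq_self_iff_true, if_true]
        ring
  map_add' w u := by
    funext k
    cases k with
    | none => simp [mul_add]
    | some j =>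
      by_cases h : j = j0
      · simp [h]
      · simp only [if_neg h, Pi.add_apply]
        ring
  map_smul' c w := by
    funext k
    cases k with
    | none => simp; ring
    | some j =>
      by_cases h : j = j0
      · simp [h]
      · simp only [if_neg h, Pi.smul_apply, smul_eq_mul, RingHom.id_apply]
        ring

private lemma colOp_apply_none {F n : Type*} [Field F] [DecidableEq n] (j0 : n) (β : F)
    (hβ : β ≠ 0) (a b : n → F) (w : Option n → F) :
    colOp j0 β hβ a b w none = β * w none := rfl

private lemma colOp_apply_some {F n : Type*} [Field F] [DecidableEq n] (j0 : n) (β : F)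
    (hβ : β ≠ 0) (a b : n → F) (w : Option n → F) (j : n) :
    colOp j0 β hβ a b w (some j) = if j = j0 then w (some j0)
        else w (some j) - a j * w none - b j * w (some j0) := rfl
private lemma pivot_aux {F m n : Type*} [Field F] [Fintype m] [Fintype n] [DecidableEq n]
    (B : Matrix (Option m) (Option n) F) (j0 : n)
    (hp : B none (some j0) ≠ 0) (h0 : B none none = 0)
    (β : F) (hβ : β ≠ 0) (g : n → F) (N : Matrix m n F)
    (hN0 : ∀ i, N i j0 = β * B (some i) none)
    (hN1 : ∀ i j, j ≠ j0 → N i j = B (some i) (some j) - g j * B (some i) none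
        - (B none (some j) / B none (some j0)) * B (some i) (some j0)) :
    B.rank = N.rank + 1 := by
  classical
  set p := B none (some j0) with hpdef
  let S : (Option n → F) ≃ₗ[F] (Option n → F) :=
    colOp j0 β hβ g (fun j => B none (some j) / p)
  set B1 : Matrix (Option m) (Option n) F := Matrix.of (fun r k => S (B r) k) with hB1
  -- row values of B1
  have hS0n : B1 none none = 0 := by
    show S (B none) none = 0
    rw [colOp_apply_none, h0, mul_zero]
  have hS0j0 : B1 none (some j0) = p := by
    show S (B none) (some j0) = p
    rw [colOp_apply_some, if_pos rfl]
  have hS0j : ∀ j, j ≠ j0 → B1 none (some j) = 0 := by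
    intro j hj
    show S (B none) (some j) = 0
    rw [colOp_apply_some, if_neg hj, h0, mul_zero, sub_zero, div_mul_cancel₀ _ hp, sub_self]
  have hSin : ∀ i, B1 (some i) none = β * B (some i) none := fun i => rfl
  have hSij0 : ∀ i, B1 (some i) (some j0) = B (some i) (some j0) := by
    intro i
    show S (B (some i)) (some j0) = _
    rw [colOp_apply_some, if_pos rfl]
  have hSij : ∀ i j, j ≠ j0 → B1 (some i) (some j) = N i j := by
    intro i j hj
    show S (B (some i)) (some j) = _
    rw [colOp_apply_some, if_neg hj, hN1 i j hj]
  -- rank B = rank B1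
  have h1 : B.rank = B1.rank := by
    rw [Matrix.rank_eq_finrank_span_row, Matrix.rank_eq_finrank_span_row]
    have hr : Set.range B1.row = ⇑S '' Set.range B.row := by
      rw [← Set.range_comp]; rfl
    rw [hr, ← LinearEquiv.coe_coe, Submodule.span_image]
    exact (LinearEquiv.finrank_map_eq S (Submodule.span F (Set.range B))).symm
  -- row operations
  set B2 : Matrix (Option m) (Option n) F := Matrix.of (fun r k =>
    match r with
    | none => B1 none k
    | some i => B1 (some i) k - (B (some i) (some j0) / p) * B1 none k) with hB2
  have h2 : B1.rank = B2.rank := by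
    rw [Matrix.rank_eq_finrank_span_row, Matrix.rank_eq_finrank_span_row]
    have hsp : Submodule.span F (Set.range B2) = Submodule.span F (Set.range B1) := by
      apply le_antisymm <;> rw [Submodule.span_le] <;> rintro _ ⟨r, rfl⟩
      · cases r with
        | none => exact Submodule.subset_span ⟨none, rfl⟩
        | some i =>
          have he : B2 (some i) = B1 (some i) - (B (some i) (some j0) / p) • B1 none := by
            funext k; rfl
          rw [he]
          exact Submodule.sub_mem _ (Submodule.subset_span ⟨some i, rfl⟩)
            (Submodule.smul_mem _ _ (Submodule.subset_span ⟨none, rfl⟩))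
      · cases r with
        | none => exact Submodule.subset_span ⟨none, rfl⟩
        | some i =>
          have he : B1 (some i) = B2 (some i) + (B (some i) (some j0) / p) • B2 none := by
            funext k
            show B1 (some i) k = B1 (some i) k - (B (some i) (some j0) / p) * B1 none k
              + (B (some i) (some j0) / p) * B1 none k
            ring
          rw [he]
          exact Submodule.add_mem _ (Submodule.subset_span ⟨some i, rfl⟩)
            (Submodule.smul_mem _ _ (Submodule.subset_span ⟨none, rfl⟩))
    exact congrArg (fun s : Submodule F (Option n → F) => Module.finrank F s) hsp.symm
  -- entries of B2
  have hB2nn : B2 none none = 0 := hS0n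
  have hB2nj0 : B2 none (some j0) = p := hS0j0
  have hB2nj : ∀ j, j ≠ j0 → B2 none (some j) = 0 := hS0j
  have hB2in : ∀ i, B2 (some i) none = N i j0 := by
    intro i
    show B1 (some i) none - (B (some i) (some j0) / p) * B1 none none = _
    rw [hS0n, hSin, mul_zero, sub_zero, hN0]
  have hB2ij0 : ∀ i, B2 (some i) (some j0) = 0 := by
    intro i
    show B1 (some i) (some j0) - (B (some i) (some j0) / p) * B1 none (some j0) = _
    rw [hS0j0, hSij0, div_mul_cancel₀ _ hp, sub_self]
  have hB2ij : ∀ i j, j ≠ j0 → B2 (some i) (some j) = N i j := by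
    intro i j hj
    show B1 (some i) (some j) - (B (some i) (some j0) / p) * B1 none (some j) = _
    rw [hS0j j hj, hSij i j hj, mul_zero, sub_zero]
  -- swap columns none and j0
  set s : Option n ≃ Option n := Equiv.swap none (some j0) with hs
  set C : Matrix (Option m) (Option n) F := B2.submatrix (Equiv.refl (Option m)) s with hC
  have h3 : C.rank = B2.rank := rank_submatrix'' _ _ _
  have hsn : s none = some j0 := Equiv.swap_apply_left _ _
  have hsj0 : s (some j0) = none := Equiv.swap_apply_right _ _
  have hsj : ∀ j, j ≠ j0 → s (some j) = some j := by
    intro j hj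
    exact Equiv.swap_apply_of_ne_of_ne (by simp) (by simpa using hj)
  have h4 : C.rank = N.rank + 1 := by
    have e1 : C none none = p := by
      show B2 none (s none) = p
      rw [hsn, hB2nj0]
    have e2 : ∀ j, C none (some j) = 0 := by
      intro j
      show B2 none (s (some j)) = 0
      by_cases hj : j = j0
      · rw [hj, hsj0, hB2nn]
      · rw [hsj j hj, hB2nj j hj]
    have e3 : ∀ i, C (some i) none = 0 := by
      intro i
      show B2 (some i) (s none) = 0
      rw [hsn, hB2ij0]
    have hro := rank_option_block C (by rw [e1]; exact hp) e2 e3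
    have hCN : (Matrix.of fun i j => C (some i) (some j)) = N := by
      ext i j
      show B2 (some i) (s (some j)) = N i j
      by_cases hj : j = j0
      · rw [hj, hsj0, hB2in]
      · rw [hsj j hj, hB2ij i j hj]
    rw [hro, hCN]
  rw [h1, h2, ← h3, h4]

private lemma pivot_aux2 {F m n : Type*} [Field F] [Fintype m] [Fintype n] [DecidableEq m]
    (B : Matrix (Option m) (Option n) F) (i0 : m)
    (hp : B (some i0) none ≠ 0) (h0 : B none none = 0)
    (β : F) (hβ : β ≠ 0) (g : m → F) (N : Matrix m n F)
    (hN0 : ∀ j, N i0 j = β * B none (some j))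
    (hN1 : ∀ i j, i ≠ i0 → N i j = B (some i) (some j) - g i * B none (some j)
        - (B (some i) none / B (some i0) none) * B (some i0) (some j)) :
    B.rank = N.rank + 1 := by
  rw [← Matrix.rank_transpose B, ← Matrix.rank_transpose N]
  exact pivot_aux Bᵀ i0 hp h0 β hβ g Nᵀ (fun j => hN0 j) (fun j i hi => hN1 i j hi)
noncomputable def rkSub {V W F : Type*} [Fintype V] [Fintype W] [Field F]
    (M : Matrix V W F) (X : Finset V) (Y : Finset W) : ℕ :=
  (M.submatrix (fun i : X => (i : V)) (fun j : Y => (j : W))).rank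

/-- Cut-rank in `(G ∧ xy) − x` expressed via a rank of a bordered matrix of `G`
(the corner `(x,x)` entry being `0 = M x x`). -/
theorem pivot_delete_cutrank {F V : Type*} [Field F] [Fintype V] [DecidableEq V]
    (σ : F → F)
    (hinv : ∀ a : F, σ (σ a) = a)
    (hauto : ∃ e : F ≃+* F, ∀ x : F, e x = σ x / σ 1)
    (M : Matrix V V F) (hsym : ∀ z t : V, M z t = σ (M t z))
    (hdiag : ∀ z : V, M z z = 0)
    (x y : V) (hxy : x ≠ y) (hedge : M x y ≠ 0)
    (N : Matrix V V F)
    (hN : ∀ z t : V,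
      N z t =
        if z = t then 0
        else if z = x ∧ t = y then -1 / M y x
        else if z = y ∧ t = x then -(σ 1 ^ 2) / M x y
        else if z = x then M y t / M y x
        else if z = y then σ 1 * M x t / M x y
        else if t = x then σ 1 * M z y / M x y
        else if t = y then M z x / M y x
        else M z t - M z x * M y t / M y x - M z y * M x t / M x y) :
    ∀ X : Finset V, x ∉ X →
      rkSub N X (Xᶜ.erase x) = rkSub M (insert x X) Xᶜ - 1 := by
  classical
  obtain ⟨e, he⟩ := hauto
  have hσ1 : σ 1 ≠ 0 := by
    intro h
    have h1 := he 1
    rw [h, div_zero] at h1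
    exact one_ne_zero (by rw [← map_one e, h1])
  have hσ0 : ∀ a : F, σ a = 0 → a = 0 := by
    intro a ha
    have h1 : e a = e 0 := by rw [he a, ha, zero_div, map_zero]
    exact e.injective h1
  have hyx : M y x ≠ 0 := by
    intro h
    rw [hsym y x] at h
    exact hedge (hσ0 _ h)
  intro X hx
  have hxc : x ∈ Xᶜ := Finset.mem_compl.mpr hx
  have hxe : x ∉ Xᶜ.erase x := Finset.notMem_erase x _
  have hins : insert x (Xᶜ.erase x) = Xᶜ := Finset.insert_erase hxc
  let eR : Option ↥X ≃ ↥(insert x X) := (Finset.subtypeInsertEquivOption hx).symm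
  let eC : Option ↥(Xᶜ.erase x) ≃ ↥Xᶜ :=
    (Finset.subtypeInsertEquivOption hxe).symm.trans
      (Equiv.subtypeEquivRight (fun a => by rw [hins]))
  set A : Matrix ↥(insert x X) ↥Xᶜ F :=
    M.submatrix (fun i : ↥(insert x X) => (i : V)) (fun j : ↥Xᶜ => (j : V)) with hA
  set B : Matrix (Option ↥X) (Option ↥(Xᶜ.erase x)) F := A.submatrix eR eC with hB
  set NX : Matrix ↥X ↥(Xᶜ.erase x) F :=
    N.submatrix (fun i : ↥X => (i : V)) (fun j : ↥(Xᶜ.erase x) => (j : V)) with hNX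
  have hrkB : B.rank = rkSub M (insert x X) Xᶜ := rank_submatrix'' _ eR eC
  have hrkN : rkSub N X (Xᶜ.erase x) = NX.rank := rfl
  have hBval : ∀ o o', B o o' =
      M (Option.elim o x (fun z => (z : V))) (Option.elim o' x (fun t => (t : V))) := by
    rintro (_ | z) (_ | t) <;> rfl
  -- membership facts
  have hzx : ∀ z : ↥X, (z : V) ≠ x := fun z h => hx (h ▸ z.2)
  have htx : ∀ t : ↥(Xᶜ.erase x), (t : V) ≠ x := fun t => (Finset.mem_erase.mp t.2).1
  have htX : ∀ t : ↥(Xᶜ.erase x), (t : V) ∉ X :=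
    fun t => Finset.mem_compl.mp (Finset.mem_erase.mp t.2).2
  have hzt : ∀ (z : ↥X) (t : ↥(Xᶜ.erase x)), (z : V) ≠ (t : V) :=
    fun z t h => htX t (h ▸ z.2)
  suffices h : B.rank = NX.rank + 1 by
    rw [hrkN, ← hrkB, h]
    omega
  by_cases hy : y ∈ X
  · -- pivot row is y
    have hty : ∀ t : ↥(Xᶜ.erase x), (t : V) ≠ y := fun t h => htX t (h ▸ hy)
    refine pivot_aux2 B ⟨y, hy⟩ ?_ ?_ (σ 1 / M x y) (div_ne_zero hσ1 hedge)
      (fun i => M (i : V) y / M x y) NX ?_ ?_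
    · rw [hBval]; exact hyx
    · rw [hBval]; exact hdiag x
    · intro j
      show N y (j : V) = _
      rw [hN]
      simp only [hBval, Option.elim]
      simp [Ne.symm (hty j), Ne.symm hxy, htx j]
      ring
    · intro i j hij
      have hiy : (i : V) ≠ y := fun h => hij (Subtype.ext h)
      show N (i : V) (j : V) = _
      rw [hN]
      simp only [hBval, Option.elim]
      simp [hzt i j, hzx i, htx j, hiy, hty j]
      ring
  · -- pivot column is y
    have hyc : y ∈ Xᶜ.erase x := Finset.mem_erase.mpr ⟨Ne.symm hxy, Finset.mem_compl.mpr hy⟩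
    have hzy : ∀ z : ↥X, (z : V) ≠ y := fun z h => hy (h ▸ z.2)
    refine pivot_aux B ⟨y, hyc⟩ ?_ ?_ (M y x)⁻¹ (inv_ne_zero hyx)
      (fun j => M y (j : V) / M y x) NX ?_ ?_
    · rw [hBval]; exact hedge
    · rw [hBval]; exact hdiag x
    · intro i
      show N (i : V) y = _
      rw [hN]
      simp only [hBval, Option.elim]
      simp [hzy i, hzx i, Ne.symm hxy]
      ring
    · intro i j hij
      have hjy : (j : V) ≠ y := fun h => hij (Subtype.ext h)
      show N (i : V) (j : V) = _
      rw [hN]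
      simp only [hBval, Option.elim]
      simp [hzt i j, hzx i, hzy i, htx j, hjy]
      ring
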